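/- In the braid group of type B₂, i.e. the group with presentation ⟨σ₁, σ₂ ∣ σ₁σ₂σ₁σ₂ = σ₂σ₁σ₂σ₁⟩, the center equals the cyclic subgroup generated by the element Δ_B = (σ₁σ₂)². -/

import Mathlib

/-- Relator of the braid group of type `B₂`: `(σ₁σ₂)²(σ₂σ₁)⁻²`. -/
def B2BraidRels : Set (FreeGroup (Fin 2)) :=
  { (FreeGroup.of 0 * FreeGroup.of 1) ^ 2 * ((FreeGroup.of 1 * FreeGroup.of 0) ^ 2)⁻¹ }

open Monoid

/-- The family `![ℤ, ℤ/2]` (multiplicative), indexed by `Bool`. -/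
def MM : Bool → Type
  | false => Multiplicative ℤ
  | true => Multiplicative (ZMod 2)

instance instGroupMM : (b : Bool) → Group (MM b)
  | false => inferInstanceAs (Group (Multiplicative ℤ))
  | true => inferInstanceAs (Group (Multiplicative (ZMod 2)))

instance instDecEqMM : (b : Bool) → DecidableEq (MM b)
  | false => inferInstanceAs (DecidableEq (Multiplicative ℤ))
  | true => inferInstanceAs (DecidableEq (Multiplicative (ZMod 2)))

/-- The free product `ℤ * ℤ/2`. -/
abbrev QQ : Type := Monoid.CoprodI MM

instance : Fintype (MM true) := inferInstanceAs (Fintype (Multiplicative (ZMod 2)))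

def xgen : MM false := Multiplicative.ofAdd (1 : ℤ)
def sgen : MM true := Multiplicative.ofAdd (1 : ZMod 2)

def XX : QQ := CoprodI.of xgen
def SS : QQ := CoprodI.of sgen

lemma sgen_ne_one : sgen ≠ 1 := by decide
lemma xgen_ne_one : xgen ≠ 1 := by decide
lemma eq_sgen_of_ne_one (m : MM true) (h : m ≠ 1) : m = sgen := by revert m; decide

lemma SS_mul_SS : SS * SS = 1 := by
  rw [SS, ← map_mul]
  have : sgen * sgen = 1 := by decide
  rw [this, map_one]

lemma wordProd_injective : Function.Injective (CoprodI.Word.prod : CoprodI.Word MM → QQ) := by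
  intro w1 w2 h
  have h1 := (CoprodI.Word.equiv (M := MM)).right_inv w1
  have h2 := (CoprodI.Word.equiv (M := MM)).right_inv w2
  have : CoprodI.Word.equiv (M := MM) (CoprodI.Word.prod w1)
      = CoprodI.Word.equiv (M := MM) (CoprodI.Word.prod w2) := by
    exact congrArg _ h
  calc w1 = CoprodI.Word.equiv (M := MM) (CoprodI.Word.prod w1) := h1.symm
    _ = CoprodI.Word.equiv (M := MM) (CoprodI.Word.prod w2) := this
    _ = w2 := h2

def listProd (L : List (Σ b, MM b)) : QQ := (L.map fun l => CoprodI.of l.2).prod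

@[simp] lemma listProd_nil : listProd [] = 1 := rfl

@[simp] lemma listProd_cons (x : Σ b, MM b) (L : List (Σ b, MM b)) :
    listProd (x :: L) = CoprodI.of x.2 * listProd L := by
  simp [listProd]

@[simp] lemma listProd_append (L L' : List (Σ b, MM b)) :
    listProd (L ++ L') = listProd L * listProd L' := by
  simp [listProd]

lemma word_prod_eq (w : CoprodI.Word MM) : w.prod = listProd w.toList := rfl

lemma center_trivial (q : QQ) (hX : q * XX = XX * q) (hS : q * SS = SS * q) : q = 1 := by
  set w := CoprodI.Word.equiv (M := MM) q with hwdef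
  have hw : w.prod = q := (CoprodI.Word.equiv (M := MM)).left_inv q
  rw [word_prod_eq] at hw
  rcases hL : w.toList with _ | ⟨l₀, L₁⟩
  · have : w = CoprodI.Word.empty := CoprodI.Word.ext hL
    rw [← hw, hL, listProd_nil]
  · exfalso
    have hmem0 : l₀ ∈ w.toList := by rw [hL]; exact List.mem_cons_self
    obtain ⟨L₂, lend, hL2⟩ : ∃ L₂ lend, w.toList = L₂ ++ [lend] := by
      rcases List.eq_nil_or_concat w.toList with h | ⟨L₂, lend, h⟩
      · rw [hL] at h; cases h
      · exact ⟨L₂, lend, by simpa [List.concat_eq_append] using h⟩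
    have hmemend : lend ∈ w.toList := by rw [hL2]; simp
    -- the same-ends case, done generically
    have ends : ∀ (i : Bool) (gm : MM i), gm ≠ 1 → i ≠ l₀.1 → i ≠ lend.1 →
        q * CoprodI.of gm = CoprodI.of gm * q → False := by
      intro i gm hgm hil hie hg
      have h2' : lend.1 ≠ i := fun h => hie h.symm
      set w₁ : CoprodI.Word MM :=
        { toList := ⟨i, gm⟩ :: w.toList
          ne_one := by
            intro l hl
            rcases List.mem_cons.mp hl with rfl | hl
            · exact hgm
            · exact w.ne_one l hl
          chain_ne := by
            refine w.chain_ne.cons ?_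
            intro y hy
            rw [hL] at hy
            simp at hy
            subst hy
            exact hil } with hw₁
      set w₂ : CoprodI.Word MM :=
        { toList := w.toList ++ [⟨i, gm⟩]
          ne_one := by
            intro l hl
            rcases List.mem_append.mp hl with hl | hl
            · exact w.ne_one l hl
            · simp at hl; subst hl; exact hgm
          chain_ne := by
            refine List.isChain_append.mpr ⟨w.chain_ne, List.isChain_singleton _, ?_⟩
            intro x hx y hy
            rw [hL2, List.getLast?_concat] at hx
            simp at hx hy
            subst hx; subst hy
            exact h2' } with hw₂
      have hp : w₁.prod = w₂.prod := by
        rw [word_prod_eq, word_prod_eq, hw₁, hw₂]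
        simp [hw, hg.symm]
      have hlists : (⟨i, gm⟩ :: w.toList : List (Σ b, MM b)) = w.toList ++ [⟨i, gm⟩] :=
        congrArg CoprodI.Word.toList (wordProd_injective hp)
      rw [hL] at hlists
      have h3 : (⟨i, gm⟩ : Σ b, MM b) = l₀ := by
        have := congrArg List.head? hlists
        simpa using this
      exact hil (congrArg Sigma.fst h3)
    rcases hb0 : l₀.1 with _ | _ <;> rcases hb1 : lend.1 with _ | _
    · -- false, false : conjugate by SS
      exact ends true sgen sgen_ne_one (by simp [hb0]) (by simp [hb1]) hS
    · -- false, true : strip the last letter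
      rcases lend with ⟨b₁, m₁⟩
      simp at hb1; subst hb1
      have hm₁ : m₁ = sgen := eq_sgen_of_ne_one m₁ (w.ne_one _ hmemend)
      subst hm₁
      set w₁ : CoprodI.Word MM :=
        { toList := (⟨true, sgen⟩ : Σ b, MM b) :: w.toList
          ne_one := by
            intro l hl
            rcases List.mem_cons.mp hl with rfl | hl
            · exact sgen_ne_one
            · exact w.ne_one l hl
          chain_ne := by
            refine w.chain_ne.cons ?_
            intro y hy
            rw [hL] at hy
            simp at hy
            subst hy
            simp [hb0] } with hw₁
      set w₂ : CoprodI.Word MM :=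
        { toList := L₂
          ne_one := fun l hl => w.ne_one l (by rw [hL2]; exact List.mem_append_left _ hl)
          chain_ne := by
            have := w.chain_ne
            rw [hL2] at this
            exact (List.isChain_append.mp this).1 } with hw₂
      have hq : q = listProd L₂ * SS := by
        rw [← hw, hL2]
        simp [SS]
      have hp : w₁.prod = w₂.prod := by
        rw [word_prod_eq, word_prod_eq, hw₁, hw₂]
        simp only [listProd_cons, hw]
        show SS * q = listProd L₂
        rw [← hS, hq, mul_assoc, SS_mul_SS, mul_one]
      have := congrArg (fun w : CoprodI.Word MM => w.toList.length) (wordProd_injective hp)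
      rw [hw₁, hw₂] at this
      simp [hL2] at this
      omega
    · -- true, false : strip the first letter
      rcases l₀ with ⟨b₀, m₀⟩
      simp at hb0; subst hb0
      have hm₀ : m₀ = sgen := eq_sgen_of_ne_one m₀ (w.ne_one _ hmem0)
      subst hm₀
      set w₁ : CoprodI.Word MM :=
        { toList := w.toList ++ [⟨true, sgen⟩]
          ne_one := by
            intro l hl
            rcases List.mem_append.mp hl with hl | hl
            · exact w.ne_one l hl
            · simp at hl; subst hl; exact sgen_ne_one
          chain_ne := by
            refine List.isChain_append.mpr ⟨w.chain_ne, List.isChain_singleton _, ?_⟩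
            intro x hx y hy
            rw [hL2, List.getLast?_concat] at hx
            simp at hx hy
            subst hx; subst hy
            simp [hb1] } with hw₁
      set w₂ : CoprodI.Word MM :=
        { toList := L₁
          ne_one := fun l hl => w.ne_one l (by rw [hL]; exact List.mem_cons_of_mem _ hl)
          chain_ne := by
            have := w.chain_ne
            rw [hL] at this
            exact (List.isChain_cons.mp this).2 } with hw₂
      have hq : q = SS * listProd L₁ := by
        rw [← hw, hL]
        simp [SS]
      have hp : w₁.prod = w₂.prod := by
        rw [word_prod_eq, word_prod_eq, hw₁, hw₂]
        simp only [listProd_append, listProd_cons, listProd_nil, hw, mul_one]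
        show q * SS = listProd L₁
        rw [hS, hq, ← mul_assoc, SS_mul_SS, one_mul]
      have := congrArg (fun w : CoprodI.Word MM => w.toList.length) (wordProd_injective hp)
      rw [hw₁, hw₂] at this
      simp [hL] at this
      omega
    · -- true, true : conjugate by XX
      exact ends false xgen xgen_ne_one (by simp [hb0]) (by simp [hb1]) hX


abbrev GG : Type := PresentedGroup B2BraidRels

def ga : GG := PresentedGroup.of 0
def gb : GG := PresentedGroup.of 1
def gc : GG := (ga * gb) ^ 2

lemma grel : (ga * gb) ^ 2 = (gb * ga) ^ 2 := by
  have h : ((FreeGroup.of 0 * FreeGroup.of 1) ^ 2 * ((FreeGroup.of 1 * FreeGroup.of 0) ^ 2)⁻¹ :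
      FreeGroup (Fin 2)) ∈ B2BraidRels := rfl
  have h1 : (PresentedGroup.mk B2BraidRels
      ((FreeGroup.of 0 * FreeGroup.of 1) ^ 2 * ((FreeGroup.of 1 * FreeGroup.of 0) ^ 2)⁻¹)) = 1 :=
    (QuotientGroup.eq_one_iff _).mpr (Subgroup.subset_normalClosure h)
  simp only [map_mul, map_pow, map_inv] at h1
  have ha : PresentedGroup.mk B2BraidRels (FreeGroup.of 0) = ga := rfl
  have hb : PresentedGroup.mk B2BraidRels (FreeGroup.of 1) = gb := rfl
  rw [ha, hb] at h1
  exact mul_inv_eq_one.mp h1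

lemma gc_comm_ga : ga * gc = gc * ga := by
  rw [gc]
  calc ga * (ga * gb) ^ 2 = ga * (gb * ga) ^ 2 := by rw [grel]
    _ = (ga * gb) ^ 2 * ga := by simp only [sq]; simp [mul_assoc]

lemma gc_comm_gb : gb * gc = gc * gb := by
  rw [gc]
  calc gb * (ga * gb) ^ 2 = (gb * ga) ^ 2 * gb := by simp only [sq]; simp [mul_assoc]
    _ = (ga * gb) ^ 2 * gb := by rw [grel]

lemma gc_mem_center : gc ∈ Subgroup.center GG := by
  rw [Subgroup.mem_center_iff]
  intro g
  have hg : g ∈ Subgroup.centralizer {gc} := by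
    refine PresentedGroup.generated_by _ _ ?_ g
    intro j
    rw [Subgroup.mem_centralizer_iff]
    fin_cases j
    · rintro h rfl
      exact gc_comm_ga.symm
    · rintro h rfl
      exact gc_comm_gb.symm
  have := Subgroup.mem_centralizer_iff.mp hg gc rfl
  exact this.symm

instance zpowers_gc_normal : (Subgroup.zpowers gc).Normal := by
  constructor
  intro n hn g
  rw [Subgroup.mem_zpowers_iff] at hn ⊢
  obtain ⟨k, rfl⟩ := hn
  refine ⟨k, ?_⟩
  have hz : gc ^ k ∈ Subgroup.center GG := (Subgroup.center GG).zpow_mem gc_mem_center k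
  have h := Subgroup.mem_center_iff.mp hz g
  rw [h, mul_assoc, mul_inv_cancel, mul_one]

abbrev GQ : Type := GG ⧸ Subgroup.zpowers gc

def piQ : GG →* GQ := QuotientGroup.mk' (Subgroup.zpowers gc)

def fm : Fin 2 → QQ := ![XX, XX⁻¹ * SS]

lemma hrels : ∀ r ∈ B2BraidRels, FreeGroup.lift fm r = 1 := by
  rintro r hr
  rw [B2BraidRels, Set.mem_singleton_iff] at hr
  subst hr
  simp only [map_mul, map_pow, map_inv, FreeGroup.lift_apply_of]
  have h0 : fm 0 = XX := rfl
  have h1 : fm 1 = XX⁻¹ * SS := rfl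
  rw [h0, h1]
  have e1 : XX * (XX⁻¹ * SS) = SS := by group
  have e2 : (XX⁻¹ * SS * XX) ^ 2 = XX⁻¹ * (SS * SS) * XX := by
    simp only [sq]; simp [mul_assoc]
  rw [e1, e2, SS_mul_SS, sq, SS_mul_SS, mul_one, inv_mul_cancel, one_mul, inv_one]

def phiQ : GG →* QQ := PresentedGroup.toGroup hrels

lemma phi_ga : phiQ ga = XX := PresentedGroup.toGroup.of hrels
lemma phi_gb : phiQ gb = XX⁻¹ * SS := PresentedGroup.toGroup.of hrels

lemma phi_gab : phiQ (ga * gb) = SS := by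
  rw [map_mul, phi_ga, phi_gb, ← mul_assoc, mul_inv_cancel, one_mul]

lemma piQ_gab_sq : (piQ (ga * gb)) ^ (2 : ℕ) = 1 := by
  rw [← map_pow]
  have : (ga * gb) ^ (2 : ℕ) = gc := rfl
  rw [this]
  exact (QuotientGroup.eq_one_iff gc).mpr (Subgroup.mem_zpowers gc)

def homT : Multiplicative (ZMod 2) →* GQ :=
  AddMonoidHom.toMultiplicativeLeft
    (ZMod.lift 2 ⟨zmultiplesHom (Additive GQ) (Additive.ofMul (piQ (ga * gb))), by
      show ((2 : ℕ) : ℤ) • Additive.ofMul (piQ (ga * gb)) = 0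
      rw [natCast_zsmul, ← ofMul_pow, piQ_gab_sq]
      rfl⟩)

lemma homT_apply : homT (Multiplicative.ofAdd (1 : ZMod 2)) = piQ (ga * gb) := by
  rw [homT, AddMonoidHom.coe_toMultiplicativeLeft]
  simp only [Function.comp_apply, toAdd_ofAdd]
  have : (1 : ZMod 2) = ((1 : ℤ) : ZMod 2) := by norm_cast
  rw [this, ZMod.lift_coe]
  simp

def fam : ∀ b, MM b →* GQ := fun b =>
  match b with
  | false => zpowersHom GQ (piQ ga)
  | true => homT

def psiQ : QQ →* GQ := CoprodI.lift fam

lemma psi_XX : psiQ XX = piQ ga := by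
  rw [XX, psiQ, CoprodI.lift_of]
  show zpowersHom GQ (piQ ga) xgen = piQ ga
  show piQ ga ^ (Multiplicative.toAdd (Multiplicative.ofAdd (1 : ℤ))) = piQ ga
  simp

lemma psi_SS : psiQ SS = piQ (ga * gb) := by
  rw [SS, psiQ, CoprodI.lift_of]
  exact homT_apply

lemma psi_phi : psiQ.comp phiQ = piQ := by
  refine PresentedGroup.ext ?_
  intro x
  fin_cases x
  · show psiQ (phiQ ga) = piQ ga
    rw [phi_ga, psi_XX]
  · show psiQ (phiQ gb) = piQ gb
    rw [phi_gb, map_mul, map_inv, psi_XX, psi_SS, ← map_inv, ← map_mul, inv_mul_cancel_left]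

theorem stmt_15 :
    Subgroup.center (PresentedGroup B2BraidRels) =
      Subgroup.zpowers
        (((PresentedGroup.of 0 : PresentedGroup B2BraidRels) * PresentedGroup.of 1) ^ 2) := by
  apply le_antisymm
  · intro g hg
    have hcom := Subgroup.mem_center_iff.mp hg
    have h1 : phiQ g * XX = XX * phiQ g := by
      rw [← phi_ga, ← map_mul, ← map_mul, hcom ga]
    have h2 : phiQ g * SS = SS * phiQ g := by
      rw [← phi_gab, ← map_mul, ← map_mul, hcom (ga * gb)]
    have h3 : phiQ g = 1 := center_trivial (phiQ g) h1 h2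
    have h4 : piQ g = 1 := by
      rw [← psi_phi]
      show psiQ (phiQ g) = 1
      rw [h3, map_one]
    have h5 : g ∈ Subgroup.zpowers gc := (QuotientGroup.eq_one_iff g).mp h4
    exact h5
  · exact Subgroup.zpowers_le.mpr gc_mem_center
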